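/- Let Ω be a nonempty closed set in Euclidean space ℝˢ, C ⊆ ℝˢ nonempty closed convex, x̄ ∈ Ω ∩ C, and suppose Ω is locally closed around x̄. Then the limiting normal cone with respect to C satisfies N_C(x̄, Ω) = Limsup_{x → x̄, x ∈ C} cone[x − Π(x, Ω ∩ C)], where Π(x, S) is the set of Euclidean projections of x onto S. -/

import Mathlib

open Set Filter Topology Metric

noncomputable section

def fnc {s : ℕ} (S : Set (EuclideanSpace ℝ (Fin s))) (x : EuclideanSpace ℝ (Fin s)) :
    Set (EuclideanSpace ℝ (Fin s)) :=
  {v | ∀ ε > (0:ℝ), ∀ᶠ y in nhdsWithin x S, (inner ℝ v (y - x) : ℝ) ≤ ε * ‖y - x‖}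

def fncWrt {s : ℕ} (C Ω : Set (EuclideanSpace ℝ (Fin s))) (x : EuclideanSpace ℝ (Fin s)) :
    Set (EuclideanSpace ℝ (Fin s)) :=
  {v | (∃ p > (0:ℝ), x + p • v ∈ C) ∧ v ∈ fnc (Ω ∩ C) x}

def lncWrt {s : ℕ} (C Ω : Set (EuclideanSpace ℝ (Fin s))) (xb : EuclideanSpace ℝ (Fin s)) :
    Set (EuclideanSpace ℝ (Fin s)) :=
  {v | ∃ (x : ℕ → EuclideanSpace ℝ (Fin s)) (vs : ℕ → EuclideanSpace ℝ (Fin s)),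
    (∀ k, x k ∈ Ω ∩ C) ∧ Tendsto x atTop (𝓝 xb) ∧
    (∀ k, vs k ∈ fncWrt C Ω (x k)) ∧ Tendsto vs atTop (𝓝 v)}

/-- The (multivalued) Euclidean metric projection of `x` onto `S`. -/
def proj {s : ℕ} (x : EuclideanSpace ℝ (Fin s)) (S : Set (EuclideanSpace ℝ (Fin s))) :
    Set (EuclideanSpace ℝ (Fin s)) :=
  {u | u ∈ S ∧ ‖u - x‖ = infDist x S}

lemma proj_nonempty {s : ℕ} {S : Set (EuclideanSpace ℝ (Fin s))} (hS : IsClosed S)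
    (hne : S.Nonempty) (x : EuclideanSpace ℝ (Fin s)) : ∃ u, u ∈ proj x S := by
  obtain ⟨y, hy, hdy⟩ := hS.exists_infDist_eq_dist hne x
  exact ⟨y, hy, by rw [hdy, dist_eq_norm, norm_sub_rev]⟩

lemma proj_key {s : ℕ} {S : Set (EuclideanSpace ℝ (Fin s))} {x u y : EuclideanSpace ℝ (Fin s)}
    (hu : u ∈ proj x S) (hy : y ∈ S) :
    (inner ℝ (x - u) (y - u) : ℝ) ≤ (1/2) * ‖y - u‖^2 := by
  have h1 : ‖u - x‖ ≤ ‖y - x‖ := by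
    rw [hu.2]
    calc infDist x S ≤ dist x y := infDist_le_dist_of_mem hy
    _ = ‖y - x‖ := by rw [dist_eq_norm, norm_sub_rev]
  have h2 : ‖u - x‖^2 ≤ ‖y - x‖^2 := pow_le_pow_left₀ (norm_nonneg _) h1 2
  have expand : ‖y - x‖^2 = ‖y - u‖^2 - 2 * (inner ℝ (x - u) (y - u) : ℝ) + ‖u - x‖^2 := by
    have hyx : y - x = (y - u) - (x - u) := by abel
    rw [hyx, norm_sub_sq_real, real_inner_comm, norm_sub_rev x u]
  linarith

/-- scaled projection direction is a Fréchet normal at the projection point -/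
lemma proj_fnc {s : ℕ} {S : Set (EuclideanSpace ℝ (Fin s))} {x u : EuclideanSpace ℝ (Fin s)}
    {t : ℝ} (ht : 0 ≤ t) (hu : u ∈ proj x S) : t • (x - u) ∈ fnc S u := by
  intro ε hε
  have hδpos : (0:ℝ) < 2*ε/(t+1) := by positivity
  have hball : ∀ᶠ y in 𝓝[S] u, y ∈ ball u (2*ε/(t+1)) :=
    mem_nhdsWithin_of_mem_nhds (ball_mem_nhds u hδpos)
  filter_upwards [hball, self_mem_nhdsWithin] with y hyb hyS
  have hkey := proj_key hu hyS
  have hn : (0:ℝ) ≤ ‖y - u‖ := norm_nonneg _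
  have hd : ‖y - u‖ < 2*ε/(t+1) := by
    rw [mem_ball, dist_eq_norm] at hyb; exact hyb
  have hd' : (t+1) * ‖y - u‖ < 2*ε := by
    rw [lt_div_iff₀ (by linarith : (0:ℝ) < t+1)] at hd; linarith [hd]
  rw [real_inner_smul_left]
  have h3 : t * (inner ℝ (x - u) (y - u) : ℝ) ≤ t * ((1/2) * ‖y - u‖^2) :=
    mul_le_mul_of_nonneg_left hkey ht
  nlinarith [mul_le_mul_of_nonneg_right hd'.le hn, mul_nonneg ht hn]

/-- Key approximation: a Fréchet normal wrt C at x ∈ Ω∩C is approximated by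
projection-cone vectors based at points of C near x. -/
lemma approx {s : ℕ} {Ω C : Set (EuclideanSpace ℝ (Fin s))}
    (hΩc : IsClosed Ω) (hCc : IsClosed C) (hCv : Convex ℝ C)
    {x v : EuclideanSpace ℝ (Fin s)} (hx : x ∈ Ω ∩ C)
    (hv : v ∈ fncWrt C Ω x) {η : ℝ} (hη : 0 < η) :
    ∃ y ∈ C, ∃ t : ℝ, 0 ≤ t ∧ ∃ u ∈ proj y (Ω ∩ C),
      ‖y - x‖ ≤ η ∧ ‖t • (y - u) - v‖ ≤ η := by
  obtain ⟨⟨p, hp, hpC⟩, hfnc⟩ := hv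
  set ε := η/4 with hε
  have hεpos : 0 < ε := by positivity
  have hev := hfnc ε hεpos
  rw [eventually_iff, Metric.mem_nhdsWithin_iff] at hev
  obtain ⟨δ, hδpos, hδ⟩ := hev
  obtain ⟨σ, hσpos, hσ1, hτδ, hτη⟩ : ∃ σ : ℝ, 0 < σ ∧ σ ≤ 1 ∧
      (σ*p) * (2*‖v‖+1) < δ ∧ (σ*p) * (2*‖v‖+1) < η := by
    set M := (2*‖v‖+1) with hM
    have hMpos : 0 < M := by positivity
    set σ := min 1 (min (δ/(2*p*M)) (η/(2*p*M))) with hσ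
    have h1 : (0:ℝ) < δ/(2*p*M) := by positivity
    have h2 : (0:ℝ) < η/(2*p*M) := by positivity
    refine ⟨σ, by positivity, min_le_left _ _, ?_, ?_⟩
    · have : σ ≤ δ/(2*p*M) := le_trans (min_le_right _ _) (min_le_left _ _)
      calc σ*p*M ≤ (δ/(2*p*M))*p*M := by
            apply mul_le_mul_of_nonneg_right (mul_le_mul_of_nonneg_right this hp.le) hMpos.le
        _ = δ/2 := by field_simp
        _ < δ := by linarith
    · have : σ ≤ η/(2*p*M) := le_trans (min_le_right _ _) (min_le_right _ _)
      calc σ*p*M ≤ (η/(2*p*M))*p*M := by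
            apply mul_le_mul_of_nonneg_right (mul_le_mul_of_nonneg_right this hp.le) hMpos.le
        _ = η/2 := by field_simp
        _ < η := by linarith
  set τ := σ * p with hτdef
  have hτpos : 0 < τ := mul_pos hσpos hp
  set y := x + τ • v with hy
  have hyC : y ∈ C := by
    have := hCv hx.2 hpC (by linarith : (0:ℝ) ≤ 1 - σ) hσpos.le (by ring)
    convert this using 1
    rw [hy, hτdef]
    rw [smul_add, smul_smul]
    simp only [sub_smul, one_smul]
    abel
  have hScl : IsClosed (Ω ∩ C) := hΩc.inter hCc
  obtain ⟨u, hu⟩ := proj_nonempty hScl ⟨x, hx⟩ y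
  have hyx : ‖y - x‖ = τ * ‖v‖ := by
    rw [hy]; simp [norm_smul, abs_of_pos hτpos]
  have huy : ‖u - y‖ ≤ τ * ‖v‖ := by
    rw [hu.2, ← hyx]
    calc infDist y (Ω ∩ C) ≤ dist y x := infDist_le_dist_of_mem hx
      _ = ‖y - x‖ := dist_eq_norm _ _
  have hux : ‖u - x‖ ≤ 2 * (τ * ‖v‖) := by
    have h := dist_triangle u y x
    simp only [dist_eq_norm] at h
    rw [hyx] at h
    linarith
  have huxδ : ‖u - x‖ < δ := by nlinarith [norm_nonneg v]
  have hinn : (inner ℝ v (u - x) : ℝ) ≤ ε * ‖u - x‖ := by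
    apply hδ
    exact ⟨by rw [mem_ball, dist_eq_norm]; exact huxδ, hu.1⟩
  have hexp : ‖u - y‖^2 = ‖u - x‖^2 - 2 * (τ * (inner ℝ v (u - x) : ℝ)) + τ^2 * ‖v‖^2 := by
    have h1 : u - y = (u - x) - τ • v := by rw [hy]; abel
    rw [h1, norm_sub_sq_real, real_inner_smul_right, real_inner_comm, norm_smul,
      Real.norm_eq_abs, abs_of_pos hτpos, mul_pow]
  have huysq : ‖u - y‖^2 ≤ τ^2 * ‖v‖^2 := by
    have := pow_le_pow_left₀ (norm_nonneg (u-y)) huy 2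
    calc ‖u - y‖^2 ≤ (τ*‖v‖)^2 := this
      _ = τ^2*‖v‖^2 := by ring
  have hux2 : ‖u - x‖ ≤ 2 * τ * ε := by
    by_contra hcon
    push_neg at hcon
    have hapos : 0 < ‖u - x‖ := lt_of_le_of_lt (by positivity) hcon
    nlinarith [mul_le_mul_of_nonneg_left hinn (show (0:ℝ) ≤ 2*τ by positivity),
      mul_lt_mul_of_pos_left hcon hapos]
  refine ⟨y, hyC, 1/τ, by positivity, u, hu, ?_, ?_⟩
  · rw [hyx]; nlinarith [norm_nonneg v]
  · have hyu : y - u = (x - u) + τ • v := by rw [hy]; abel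
    have hws : (1/τ) • (y - u) - v = (1/τ) • (x - u) := by
      rw [hyu, smul_add, smul_smul, one_div_mul_cancel hτpos.ne', one_smul]
      abel
    rw [hws, norm_smul, Real.norm_eq_abs, abs_of_pos (by positivity : (0:ℝ) < 1/τ),
      norm_sub_rev]
    calc (1/τ) * ‖u - x‖ ≤ (1/τ) * (2*τ*ε) := by
          apply mul_le_mul_of_nonneg_left hux2 (by positivity)
      _ = 2*ε := by field_simp
      _ ≤ η := by rw [hε]; linarith

lemma tendsto_aux {α : Type*} [PseudoMetricSpace α] {f : ℕ → α} {a : α} {g : ℕ → ℝ}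
    (hb : ∀ k, dist (f k) a ≤ 1/((k:ℝ)+1) + g k) (hg : Tendsto g atTop (𝓝 0)) :
    Tendsto f atTop (𝓝 a) := by
  rw [tendsto_iff_dist_tendsto_zero]
  apply squeeze_zero (fun k => dist_nonneg) hb
  have := tendsto_one_div_add_atTop_nhds_zero_nat.add hg
  simpa using this

/-- `N_C(xb, Ω)` equals the outer limit of `cone[x − Π(x, Ω ∩ C)]` as `x → xb` within `C`. -/
theorem stmt15 {s : ℕ} (Ω C : Set (EuclideanSpace ℝ (Fin s)))
    (hΩne : Ω.Nonempty) (hΩc : IsClosed Ω)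
    (hCne : C.Nonempty) (hCc : IsClosed C) (hCv : Convex ℝ C)
    (xb : EuclideanSpace ℝ (Fin s)) (hxb : xb ∈ Ω ∩ C) :
    lncWrt C Ω xb =
      {v | ∃ (x : ℕ → EuclideanSpace ℝ (Fin s)) (vs : ℕ → EuclideanSpace ℝ (Fin s)),
        (∀ k, x k ∈ C) ∧ Tendsto x atTop (𝓝 xb) ∧
        (∀ k, ∃ t : ℝ, 0 ≤ t ∧ ∃ u ∈ proj (x k) (Ω ∩ C), vs k = t • (x k - u)) ∧
        Tendsto vs atTop (𝓝 v)} := by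
  ext v
  constructor
  · -- lncWrt ⊆ projection limsup
    rintro ⟨x, vs, hxm, hxlim, hvm, hvlim⟩
    have happ : ∀ k : ℕ, ∃ y ∈ C, ∃ t : ℝ, 0 ≤ t ∧ ∃ u ∈ proj y (Ω ∩ C),
        ‖y - x k‖ ≤ 1/((k:ℝ)+1) ∧ ‖t • (y - u) - vs k‖ ≤ 1/((k:ℝ)+1) :=
      fun k => approx hΩc hCc hCv (hxm k) (hvm k) (by positivity)
    choose y hyC t ht u hu h1 h2 using happ
    refine ⟨y, fun k => t k • (y k - u k), hyC, ?_, fun k => ⟨t k, ht k, u k, hu k, rfl⟩, ?_⟩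
    · apply tendsto_aux (g := fun k => dist (x k) xb)
      · intro k
        calc dist (y k) xb ≤ dist (y k) (x k) + dist (x k) xb := dist_triangle _ _ _
          _ ≤ 1/((k:ℝ)+1) + dist (x k) xb := by
            rw [dist_eq_norm]; exact add_le_add_left (h1 k) _
      · exact tendsto_iff_dist_tendsto_zero.mp hxlim
    · apply tendsto_aux (g := fun k => dist (vs k) v)
      · intro k
        calc dist (t k • (y k - u k)) v ≤ dist (t k • (y k - u k)) (vs k) + dist (vs k) v :=
            dist_triangle _ _ _
          _ ≤ 1/((k:ℝ)+1) + dist (vs k) v := by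
            rw [dist_eq_norm]; exact add_le_add_left (h2 k) _
      · exact tendsto_iff_dist_tendsto_zero.mp hvlim
  · -- projection limsup ⊆ lncWrt
    rintro ⟨x, vs, hxC, hxlim, hk, hvlim⟩
    choose t ht u hu hvs using hk
    refine ⟨u, vs, fun k => (hu k).1, ?_, ?_, hvlim⟩
    · apply tendsto_aux (g := fun k => dist (x k) xb + dist (x k) xb)
      · intro k
        have hdux : dist (u k) (x k) ≤ dist (x k) xb := by
          rw [dist_eq_norm, (hu k).2]
          exact infDist_le_dist_of_mem hxb
        have h0 : (0:ℝ) ≤ 1/((k:ℝ)+1) := by positivity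
        calc dist (u k) xb ≤ dist (u k) (x k) + dist (x k) xb := dist_triangle _ _ _
          _ ≤ 1/((k:ℝ)+1) + (dist (x k) xb + dist (x k) xb) := by linarith
      · have := (tendsto_iff_dist_tendsto_zero.mp hxlim).add
          (tendsto_iff_dist_tendsto_zero.mp hxlim)
        simpa using this
    · intro k
      constructor
      · rcases eq_or_lt_of_le (ht k) with h0 | hpos
        · refine ⟨1, one_pos, ?_⟩
          have : vs k = 0 := by rw [hvs k, ← h0, zero_smul]
          rw [this, smul_zero, add_zero]
          exact (hu k).1.2
        · refine ⟨(t k)⁻¹, inv_pos.2 hpos, ?_⟩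
          have : u k + (t k)⁻¹ • vs k = x k := by
            rw [hvs k, smul_smul, inv_mul_cancel₀ hpos.ne', one_smul]
            abel
          rw [this]; exact hxC k
      · rw [hvs k]
        exact proj_fnc (ht k) (hu k)
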